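/- Let V be a finite set, let 0 < ε' ≤ 1, and let w, w' be nonnegative weight functions on the unordered pairs of distinct elements of V such that every cut is preserved within a (1 ± ε') factor: for every S ⊆ V, (1−ε')·Σ_{u∈S, v∉S} w_{uv} ≤ Σ_{u∈S, v∉S} w'_{uv} ≤ (1+ε')·Σ_{u∈S, v∉S} w_{uv}. Then for every subset C ⊆ V, the within-C weights satisfy |Σ_{{u,v}⊆C} w_{uv} − Σ_{{u,v}⊆C} w'_{uv}| ≤ ε'·Σ_{u∈C} deg_w(u), where deg_w(u) = Σ_{v≠u} w_{uv}. -/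

import Mathlib

lemma sum_offDiag_eq {V : Type*} [Fintype V] [DecidableEq V] (C : Finset V) (f : V → V → ℝ) :
    ∑ p ∈ C.offDiag, f p.1 p.2 = ∑ u ∈ C, ∑ v ∈ C.erase u, f u v := by
  rw [show C.offDiag = (C ×ˢ C).filter (fun a => a.1 ≠ a.2) from by ext; simp [and_assoc], Finset.sum_filter, Finset.sum_product]
  refine Finset.sum_congr rfl fun u hu => ?_
  rw [← Finset.filter_ne' C u, Finset.sum_filter]
  exact Finset.sum_congr rfl fun v hv => by by_cases h : u = v <;> simp [h, Ne.symm]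

lemma erase_split {V : Type*} [Fintype V] [DecidableEq V] {C : Finset V} {u : V} (hu : u ∈ C)
    (f : V → ℝ) :
    ∑ v ∈ Finset.univ.erase u, f v = ∑ v ∈ C.erase u, f v + ∑ v ∈ Cᶜ, f v := by
  rw [← Finset.sum_union]
  · congr 1
    ext v
    simp only [Finset.mem_erase, Finset.mem_union, Finset.mem_compl, Finset.mem_univ, and_true]
    constructor
    · intro hv
      by_cases h : v ∈ C
      · exact Or.inl ⟨hv, h⟩
      · exact Or.inr h
    · rintro (⟨h1, h2⟩ | h)
      · exact h1
      · intro h'; subst h'; exact h hu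
  · rw [Finset.disjoint_left]
    intro v hv hvc
    exact (Finset.mem_compl.mp hvc) (Finset.mem_of_mem_erase hv)

/-- if a nonnegative pairwise weight function `w'` preserves every cut of
`w` within a `(1 ± ε')` factor, then for every subset `C` the within-`C` weights agree
up to an additive error of `ε'` times the total `w`-weight incident to `C`. -/
theorem cut_sparsifier_within_cluster {V : Type*} [Fintype V] [DecidableEq V]
    (ε' : ℝ) (hε0 : 0 < ε') (hε1 : ε' ≤ 1)
    (w w' : V → V → ℝ)
    (hsym : ∀ u v, w u v = w v u) (hsym' : ∀ u v, w' u v = w' v u)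
    (hnn : ∀ u v, 0 ≤ w u v) (hnn' : ∀ u v, 0 ≤ w' u v)
    (hcut : ∀ S : Finset V,
      (1 - ε') * (∑ u ∈ S, ∑ v ∈ Sᶜ, w u v) ≤ (∑ u ∈ S, ∑ v ∈ Sᶜ, w' u v) ∧
      (∑ u ∈ S, ∑ v ∈ Sᶜ, w' u v) ≤ (1 + ε') * (∑ u ∈ S, ∑ v ∈ Sᶜ, w u v)) :
    ∀ C : Finset V,
      |(∑ p ∈ C.offDiag, w p.1 p.2) / 2 - (∑ p ∈ C.offDiag, w' p.1 p.2) / 2| ≤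
        ε' * ∑ u ∈ C, ∑ v ∈ Finset.univ.erase u, w u v := by
  intro C
  set D : ℝ := ∑ u ∈ C, ∑ v ∈ Finset.univ.erase u, w u v with hD
  set D' : ℝ := ∑ u ∈ C, ∑ v ∈ Finset.univ.erase u, w' u v with hD'
  set cut : ℝ := ∑ u ∈ C, ∑ v ∈ Cᶜ, w u v with hcutdef
  set cut' : ℝ := ∑ u ∈ C, ∑ v ∈ Cᶜ, w' u v with hcutdef'
  -- singleton cut: deg preserved
  have hdeg : ∀ u : V, |(∑ v ∈ Finset.univ.erase u, w' u v) -
      (∑ v ∈ Finset.univ.erase u, w u v)| ≤ ε' * ∑ v ∈ Finset.univ.erase u, w u v := by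
    intro u
    have h := hcut {u}
    simp only [Finset.sum_singleton, Finset.compl_singleton] at h
    rw [abs_sub_le_iff]
    constructor <;> nlinarith [h.1, h.2]
  have hDnn : 0 ≤ D := Finset.sum_nonneg fun u _ =>
    Finset.sum_nonneg fun v _ => hnn u v
  have hDD' : |D' - D| ≤ ε' * D := by
    rw [hD, hD', ← Finset.sum_sub_distrib, Finset.mul_sum]
    refine le_trans (Finset.abs_sum_le_sum_abs _ _) (Finset.sum_le_sum fun u _ => hdeg u)
  have hcutle : cut ≤ D := by
    refine Finset.sum_le_sum fun u hu => ?_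
    refine Finset.sum_le_sum_of_subset_of_nonneg ?_ fun v _ _ => hnn u v
    intro v hv
    rw [Finset.mem_erase]
    exact ⟨fun h => by subst h; exact (Finset.mem_compl.mp hv) hu, Finset.mem_univ v⟩
  have hcutnn : 0 ≤ cut := Finset.sum_nonneg fun u _ =>
    Finset.sum_nonneg fun v _ => hnn u v
  have hcutcut : |cut' - cut| ≤ ε' * D := by
    have h := hcut C
    rw [abs_sub_le_iff]
    constructor
    · nlinarith [h.2, mul_le_mul_of_nonneg_left hcutle hε0.le]
    · nlinarith [h.1, mul_le_mul_of_nonneg_left hcutle hε0.le]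
  have hw : ∑ p ∈ C.offDiag, w p.1 p.2 = D - cut := by
    rw [sum_offDiag_eq, hD, hcutdef, ← Finset.sum_sub_distrib]
    exact Finset.sum_congr rfl fun u hu => by rw [erase_split hu]; ring
  have hw' : ∑ p ∈ C.offDiag, w' p.1 p.2 = D' - cut' := by
    rw [sum_offDiag_eq, hD', hcutdef', ← Finset.sum_sub_distrib]
    exact Finset.sum_congr rfl fun u hu => by rw [erase_split hu]; ring
  rw [hw, hw']
  have : (D - cut) / 2 - (D' - cut') / 2 = ((D - D') + (cut' - cut)) / 2 := by ring
  rw [this]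
  rw [abs_div, abs_two]
  rw [div_le_iff₀ (by norm_num : (0:ℝ) < 2)]
  calc |D - D' + (cut' - cut)| ≤ |D - D'| + |cut' - cut| := abs_add_le _ _
    _ ≤ ε' * D + ε' * D := by
        rw [abs_sub_comm D D']; exact add_le_add hDD' hcutcut
    _ = ε' * D * 2 := by ring
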